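/- Let M be a complex-valued continuous kernel on the triangle {(x,t) : 0 ≤ t ≤ x ≤ π}, λ ∈ ℂ, and n ≥ 1. Suppose G_n is a continuous function on the triangle with G_n(x,0) = 0 for all x ∈ [0,π], and suppose e_n(x,λ) = ∫₀ˣ G_n(x,t)·exp(−iλt) dt for all x ∈ [0,π]. Define e_{n+1}(x,λ) = i·∫₀ˣ exp(−iλ(x−t)) · (∫₀ᵗ M(t,τ)·e_n(τ,λ) dτ) dt. Then e_{n+1}(x,λ) = ∫₀ˣ G_{n+1}(x,t)·exp(−iλt) dt for all x ∈ [0,π], where G_{n+1}(x,t) = i·∫_{x−t}^{x} (∫_{t+s−x}^{s} M(s,τ)·G_n(τ, t+s−x) dτ) ds; moreover G_{n+1} is continuous on the triangle and G_{n+1}(x,0) = 0. -/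

import Mathlib

open Complex MeasureTheory Set Real

/-- The triangle `{(x,t) : 0 ≤ t ≤ x ≤ π}`. -/
def Triangle : Set (ℝ × ℝ) := {p | 0 ≤ p.2 ∧ p.2 ≤ p.1 ∧ p.1 ≤ Real.pi}

lemma cont_int {H : (ℝ × ℝ) → ℝ → ℂ} (hH : Continuous (Function.uncurry H))
    {α β : ℝ × ℝ → ℝ} (hα : Continuous α) (hβ : Continuous β) :
    Continuous fun p => ∫ τ in α p..β p, H p τ := by
  have key : ∀ p, (∫ τ in α p..β p, H p τ) =
      (∫ τ in (0:ℝ)..β p, H p τ) - (∫ τ in (0:ℝ)..α p, H p τ) := by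
    intro p
    have h : ∀ a b : ℝ, IntervalIntegrable (H p) volume a b := fun a b =>
      ((hH.comp (Continuous.prodMk_right p))).intervalIntegrable a b
    rw [intervalIntegral.integral_interval_sub_left (h 0 (β p)) (h 0 (α p))]
  simp_rw [key]
  exact (intervalIntegral.continuous_parametric_intervalIntegral_of_continuous hH hβ).sub
        (intervalIntegral.continuous_parametric_intervalIntegral_of_continuous hH hα)

lemma triangle_swap {f : ℝ → ℝ → ℂ} (hf : Continuous (Function.uncurry f)) {x : ℝ} (hx : 0 ≤ x) :
    (∫ t in (0:ℝ)..x, ∫ u in (0:ℝ)..t, f t u) = ∫ u in (0:ℝ)..x, ∫ t in u..x, f t u := by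
  have m1 : MeasurableSet {p : ℝ × ℝ | p.2 ≤ p.1} := measurableSet_le measurable_snd measurable_fst
  set K : ℝ × ℝ → ℂ := ({p : ℝ × ℝ | p.2 ≤ p.1}).indicator (Function.uncurry f) with hK
  have hKi : Integrable K ((volume.restrict (Ioc 0 x)).prod (volume.restrict (Ioc 0 x))) := by
    rw [Measure.prod_restrict, ← Measure.volume_eq_prod]
    refine IntegrableOn.indicator ?_ m1
    exact (hf.integrableOn_Icc (a := ((0:ℝ),(0:ℝ))) (b := (x,x))).mono_set (by
      rw [Icc_prod_eq]
      exact Set.prod_mono Ioc_subset_Icc_self Ioc_subset_Icc_self)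
  have swap := MeasureTheory.integral_integral_swap (f := fun t u => K (t, u))
    (μ := volume.restrict (Ioc 0 x)) (ν := volume.restrict (Ioc 0 x))
    (by exact hKi)
  have L : (∫ t in (0:ℝ)..x, ∫ u in (0:ℝ)..t, f t u)
      = ∫ t in Ioc (0:ℝ) x, ∫ u in Ioc (0:ℝ) x, K (t, u) := by
    rw [intervalIntegral.integral_of_le hx]
    refine setIntegral_congr_fun measurableSet_Ioc (fun t ht => ?_)
    rw [intervalIntegral.integral_of_le ht.1.le]
    have : ∫ u in Ioc (0:ℝ) x, K (t, u) = ∫ u in Ioc (0:ℝ) x, (Iic t).indicator (f t) u := by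
      refine setIntegral_congr_fun measurableSet_Ioc (fun u _ => ?_)
      simp [hK, Set.indicator_apply, Function.uncurry]
    rw [this, setIntegral_indicator measurableSet_Iic, Ioc_inter_Iic, min_eq_right ht.2]
  have R : (∫ u in (0:ℝ)..x, ∫ t in u..x, f t u)
      = ∫ u in Ioc (0:ℝ) x, ∫ t in Ioc (0:ℝ) x, K (t, u) := by
    rw [intervalIntegral.integral_of_le hx]
    refine setIntegral_congr_fun measurableSet_Ioc (fun u hu => ?_)
    have : ∫ t in Ioc (0:ℝ) x, K (t, u)
        = ∫ t in Ioc (0:ℝ) x, (Ici u).indicator (fun t => f t u) t := by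
      refine setIntegral_congr_fun measurableSet_Ioc (fun t _ => ?_)
      simp [hK, Set.indicator_apply, Function.uncurry]
    rw [intervalIntegral.integral_of_le hu.2, this, setIntegral_indicator measurableSet_Ici]
    have hset : Ioc (0:ℝ) x ∩ Ici u = Icc u x := by
      ext t
      simp only [mem_inter_iff, mem_Ioc, mem_Ici, mem_Icc]
      constructor
      · rintro ⟨⟨_, h2⟩, h3⟩; exact ⟨h3, h2⟩
      · rintro ⟨h1, h2⟩; exact ⟨⟨lt_of_lt_of_le hu.1 h1, h2⟩, h1⟩
    rw [hset, integral_Icc_eq_integral_Ioc]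
  rw [L, R]; exact swap

lemma isClosed_Triangle : IsClosed Triangle := by
  have : Triangle = {p : ℝ × ℝ | 0 ≤ p.2} ∩ {p | p.2 ≤ p.1} ∩ {p | p.1 ≤ Real.pi} := by
    ext p; simp only [Triangle, mem_setOf_eq, mem_inter_iff]; tauto
  rw [this]
  exact ((isClosed_le continuous_const continuous_snd).inter
    (isClosed_le continuous_snd continuous_fst)).inter
    (isClosed_le continuous_fst continuous_const)

lemma memT {a b : ℝ} (h1 : 0 ≤ b) (h2 : b ≤ a) (h3 : a ≤ Real.pi) : (a, b) ∈ Triangle := by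
  simp only [Triangle, mem_setOf_eq]; exact ⟨h1, h2, h3⟩

/-- The induction step for the successive approximations: if
`eₙ(x,λ) = ∫₀ˣ Gₙ(x,t) exp(−iλt) dt` with `Gₙ` continuous on the triangle and
`Gₙ(x,0) = 0`, then `e_{n+1}(x,λ) = ∫₀ˣ G_{n+1}(x,t) exp(−iλt) dt`, where
`G_{n+1}(x,t) = i ∫_{x−t}^{x} ∫_{t+s−x}^{s} M(s,τ) Gₙ(τ, t+s−x) dτ ds` is
continuous on the triangle and `G_{n+1}(x,0) = 0`. -/
theorem stmt_3 (M : ℝ → ℝ → ℂ)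
    (hM : ContinuousOn (fun p : ℝ × ℝ => M p.1 p.2) Triangle)
    (lam : ℂ) (n : ℕ) (hn : 1 ≤ n)
    (Gn : ℝ → ℝ → ℂ)
    (hGn : ContinuousOn (fun p : ℝ × ℝ => Gn p.1 p.2) Triangle)
    (hGn0 : ∀ x ∈ Icc (0:ℝ) Real.pi, Gn x 0 = 0)
    (en : ℝ → ℂ)
    (hen : ∀ x ∈ Icc (0:ℝ) Real.pi,
      en x = ∫ t in (0:ℝ)..x, Gn x t * Complex.exp (-Complex.I * lam * t)) :
    (∀ x ∈ Icc (0:ℝ) Real.pi,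
      (Complex.I * ∫ t in (0:ℝ)..x,
          Complex.exp (-Complex.I * lam * (x - t))
            * ∫ τ in (0:ℝ)..t, M t τ * en τ)
      = ∫ t in (0:ℝ)..x,
          (Complex.I * ∫ s in (x - t)..x,
              ∫ τ in (t + s - x)..s, M s τ * Gn τ (t + s - x))
            * Complex.exp (-Complex.I * lam * t)) ∧
    ContinuousOn
      (fun p : ℝ × ℝ => Complex.I * ∫ s in (p.1 - p.2)..p.1,
          ∫ τ in (p.2 + s - p.1)..s, M s τ * Gn τ (p.2 + s - p.1))
      Triangle ∧
    (∀ x ∈ Icc (0:ℝ) Real.pi,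
      (Complex.I * ∫ s in (x - 0)..x,
          ∫ τ in (0 + s - x)..s, M s τ * Gn τ (0 + s - x)) = 0) := by
  -- Tietze extensions of M and Gn to all of ℝ²
  obtain ⟨MMc, hMMr⟩ := ContinuousMap.exists_restrict_eq (Y := ℂ) isClosed_Triangle
    ⟨_, hM.restrict⟩
  obtain ⟨GGc, hGGr⟩ := ContinuousMap.exists_restrict_eq (Y := ℂ) isClosed_Triangle
    ⟨_, hGn.restrict⟩
  set MM : ℝ × ℝ → ℂ := ⇑MMc with hMMdef
  set GG : ℝ × ℝ → ℂ := ⇑GGc with hGGdef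
  have hMMc : Continuous MM := MMc.continuous
  have hGGc : Continuous GG := GGc.continuous
  have hMM : ∀ p ∈ Triangle, MM p = M p.1 p.2 := fun p hp => by
    have := ContinuousMap.congr_fun hMMr ⟨p, hp⟩; simpa using this
  have hGG : ∀ p ∈ Triangle, GG p = Gn p.1 p.2 := fun p hp => by
    have := ContinuousMap.congr_fun hGGr ⟨p, hp⟩; simpa using this
  set E : ℝ → ℂ := fun r => Complex.exp (-Complex.I * lam * (r : ℝ)) with hEdef
  have hEc : Continuous E := by
    apply Complex.continuous_exp.comp; fun_prop
  set g : ℝ × ℝ → ℂ := fun p => ∫ τ in p.2..p.1, MM (p.1, τ) * GG (τ, p.2) with hgdef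
  have hgc : Continuous g := by
    exact cont_int (H := fun p τ => MM (p.1, τ) * GG (τ, p.2)) (by fun_prop)
      continuous_snd continuous_fst
  -- key congruence: replace original kernels by extensions in the new kernel
  have keycongr : ∀ x t : ℝ, 0 ≤ t → t ≤ x → x ≤ Real.pi →
      (∫ s in (x - t)..x, ∫ τ in (t + s - x)..s, M s τ * Gn τ (t + s - x))
        = ∫ s in (x - t)..x, g (s, t + s - x) := by
    intro x t ht htx hxπ
    refine intervalIntegral.integral_congr fun s hs => ?_
    rw [uIcc_of_le (by linarith)] at hs
    obtain ⟨hs1, hs2⟩ := hs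
    show _ = g (s, t + s - x)
    simp only [hgdef]
    refine intervalIntegral.integral_congr fun τ hτ => ?_
    rw [uIcc_of_le (by linarith)] at hτ
    obtain ⟨hτ1, hτ2⟩ := hτ
    rw [hMM (s, τ) (memT (by linarith) hτ2 (by linarith)),
        hGG (τ, t + s - x) (memT (by linarith) hτ1 (by linarith))]
  -- substitution s ↦ u + (x - t)
  have subst : ∀ x t : ℝ, (∫ s in (x - t)..x, g (s, t + s - x))
      = ∫ u in (0:ℝ)..t, g (x + u - t, u) := by
    intro x t
    have h := intervalIntegral.integral_comp_add_right (a := (0:ℝ)) (b := t)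
      (f := fun s => g (s, s - (x - t))) (x - t)
    rw [(by ring : (0:ℝ) + (x - t) = x - t), (by ring : t + (x - t) = x)] at h
    have h1 : (∫ s in (x - t)..x, g (s, t + s - x))
        = ∫ s in (x - t)..x, g (s, s - (x - t)) :=
      intervalIntegral.integral_congr fun s _ => congrArg (fun r => g (s, r)) (by ring)
    rw [h1, ← h]
    refine intervalIntegral.integral_congr fun u _ => ?_
    show g (u + (x - t), u + (x - t) - (x - t)) = g (x + u - t, u)
    rw [(by ring : u + (x - t) - (x - t) = u), (by ring : u + (x - t) = x + u - t)]
  refine ⟨?_, ?_, ?_⟩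
  · -- main identity
    intro x hx
    obtain ⟨hx0, hxπ⟩ := hx
    have hrefl : ∀ u : ℝ, (∫ t in u..x, E (x - t) * (g (t, u) * E u))
        = ∫ t in u..x, g (x + u - t, u) * E t := by
      intro u
      have h1 := intervalIntegral.integral_comp_sub_left (a := u) (b := x)
        (f := fun t => E (x - t) * (g (t, u) * E u)) (x + u)
      rw [(by ring : x + u - x = u), (by ring : x + u - u = x)] at h1
      rw [← h1]
      refine intervalIntegral.integral_congr fun t _ => ?_
      show E (x - (x + u - t)) * (g (x + u - t, u) * E u) = g (x + u - t, u) * E t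
      rw [(by ring : x - (x + u - t) = t - u)]
      have e2 : E (t - u) * E u = E t := by
        simp only [hEdef]
        rw [← Complex.exp_add]; congr 1; push_cast; ring
      calc E (t - u) * (g (x + u - t, u) * E u)
          = g (x + u - t, u) * (E (t - u) * E u) := by ring
        _ = g (x + u - t, u) * E t := by rw [e2]
    have RHSeq : (∫ t in (0:ℝ)..x,
          (Complex.I * ∫ s in (x - t)..x,
              ∫ τ in (t + s - x)..s, M s τ * Gn τ (t + s - x))
            * Complex.exp (-Complex.I * lam * t))
        = Complex.I * ∫ t in (0:ℝ)..x, (∫ u in (0:ℝ)..t, g (x + u - t, u)) * E t := by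
      rw [← intervalIntegral.integral_const_mul]
      refine intervalIntegral.integral_congr fun t ht => ?_
      rw [uIcc_of_le hx0] at ht
      rw [keycongr x t ht.1 ht.2 hxπ, subst x t, mul_assoc]
    rw [RHSeq]
    -- now transform the LHS
    have step1 : (∫ t in (0:ℝ)..x,
          Complex.exp (-Complex.I * lam * (x - t)) * ∫ τ in (0:ℝ)..t, M t τ * en τ)
        = ∫ t in (0:ℝ)..x, E (x - t)
            * ∫ τ in (0:ℝ)..t, MM (t, τ) * (∫ u in (0:ℝ)..τ, GG (τ, u) * E u) := by
      refine intervalIntegral.integral_congr fun t ht => ?_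
      rw [uIcc_of_le hx0] at ht
      congr 1
      · rw [← Complex.ofReal_sub]
      · refine intervalIntegral.integral_congr fun τ hτ => ?_
        rw [uIcc_of_le ht.1] at hτ
        rw [hMM (t, τ) (memT hτ.1 hτ.2 (by linarith [ht.2])),
          hen τ ⟨hτ.1, by linarith [hτ.2, ht.2]⟩]
        congr 1
        refine intervalIntegral.integral_congr fun u hu => ?_
        rw [uIcc_of_le hτ.1] at hu
        rw [hGG (τ, u) (memT hu.1 hu.2 (by linarith [hτ.2, ht.2]))]
    have step2 : ∀ t ∈ Icc (0:ℝ) x,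
        (∫ τ in (0:ℝ)..t, MM (t, τ) * (∫ u in (0:ℝ)..τ, GG (τ, u) * E u))
          = ∫ u in (0:ℝ)..t, g (t, u) * E u := by
      intro t ht
      have A : (∫ τ in (0:ℝ)..t, MM (t, τ) * (∫ u in (0:ℝ)..τ, GG (τ, u) * E u))
          = ∫ τ in (0:ℝ)..t, ∫ u in (0:ℝ)..τ, MM (t, τ) * (GG (τ, u) * E u) := by
        refine intervalIntegral.integral_congr fun τ _ => ?_
        rw [← intervalIntegral.integral_const_mul]
      rw [A, triangle_swap (f := fun τ u => MM (t, τ) * (GG (τ, u) * E u)) (by fun_prop) ht.1]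
      refine intervalIntegral.integral_congr fun u _ => ?_
      have B : (∫ τ in u..t, MM (t, τ) * (GG (τ, u) * E u))
          = ∫ τ in u..t, (MM (t, τ) * GG (τ, u)) * E u :=
        intervalIntegral.integral_congr fun τ _ => by ring
      rw [B, intervalIntegral.integral_mul_const]
    calc Complex.I * ∫ t in (0:ℝ)..x,
          Complex.exp (-Complex.I * lam * (x - t)) * ∫ τ in (0:ℝ)..t, M t τ * en τ
        = Complex.I * ∫ t in (0:ℝ)..x, E (x - t) * ∫ u in (0:ℝ)..t, g (t, u) * E u := by
          rw [step1]; congr 1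
          refine intervalIntegral.integral_congr fun t ht => ?_
          rw [uIcc_of_le hx0] at ht
          rw [step2 t ht]
      _ = Complex.I * ∫ t in (0:ℝ)..x, ∫ u in (0:ℝ)..t, E (x - t) * (g (t, u) * E u) := by
          congr 1
          refine intervalIntegral.integral_congr fun t _ => ?_
          rw [← intervalIntegral.integral_const_mul]
      _ = Complex.I * ∫ u in (0:ℝ)..x, ∫ t in u..x, E (x - t) * (g (t, u) * E u) := by
          congr 1
          exact triangle_swap (f := fun t u => E (x - t) * (g (t, u) * E u)) (by fun_prop) hx0
      _ = Complex.I * ∫ u in (0:ℝ)..x, ∫ t in u..x, g (x + u - t, u) * E t := by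
          congr 1
          exact intervalIntegral.integral_congr fun u _ => hrefl u
      _ = Complex.I * ∫ t in (0:ℝ)..x, ∫ u in (0:ℝ)..t, g (x + u - t, u) * E t := by
          congr 1
          exact (triangle_swap (f := fun t u => g (x + u - t, u) * E t) (by fun_prop) hx0).symm
      _ = Complex.I * ∫ t in (0:ℝ)..x, (∫ u in (0:ℝ)..t, g (x + u - t, u)) * E t := by
          congr 1
          refine intervalIntegral.integral_congr fun t _ => ?_
          rw [intervalIntegral.integral_mul_const]
  · -- continuity
    have cont2 : Continuous (fun p : ℝ × ℝ =>
        Complex.I * ∫ s in (p.1 - p.2)..p.1, g (s, p.2 + s - p.1)) :=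
      continuous_const.mul (cont_int (H := fun p s => g (s, p.2 + s - p.1)) (by fun_prop)
        (continuous_fst.sub continuous_snd) continuous_fst)
    refine ContinuousOn.congr cont2.continuousOn ?_
    intro p hp
    obtain ⟨h1, h2, h3⟩ : 0 ≤ p.2 ∧ p.2 ≤ p.1 ∧ p.1 ≤ Real.pi := hp
    exact congrArg (Complex.I * ·) (keycongr p.1 p.2 h1 h2 h3)
  · intro x _
    simp [intervalIntegral.integral_same]
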